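/- Let n ≥ 2, ω = exp(2πi/n), let Aₙ ∈ Mₙ(ℂ) be the diagonal matrix with (Aₙ)_{jj} = ω^j for j = 0,…,n−1, and let B̂ₙ be the cyclic shift matrix with (B̂ₙ)_{jk} = 1 if j ≡ k+1 (mod n) and 0 otherwise. Then for every n×n permutation matrix P and all (x,y,z) ∈ ℂ³: det(x·PᵀAₙP + y·B̂ₙ + z·(PᵀAₙP)B̂ₙ − I) = 0 if and only if xⁿ + yⁿ + (−1)^{n−1} zⁿ = 1. -/

import Mathlib

open Matrix Complex

noncomputable section

/-- A permutation matrix: the matrix of a permutation `σ`, sending the standard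
basis vector `e j` to `e (σ j)`. -/
def IsPermMatrix {n : ℕ} (P : Matrix (Fin n) (Fin n) ℂ) : Prop :=
  ∃ σ : Equiv.Perm (Fin n),
    P = Matrix.of fun i j : Fin n => if i = σ j then 1 else 0


lemma prod_aux {n : ℕ} (hn : 0 < n) {ω : ℂ} (hω : IsPrimitiveRoot ω n) (a b : ℂ) :
    ∏ j : Fin n, (a - ω ^ (j : ℕ) * b) = a ^ n - b ^ n := by
  have hinj : Function.Injective (fun j : Fin n => ω ^ (j : ℕ)) := by
    intro i j h
    exact Fin.ext (hω.pow_inj i.isLt j.isLt h)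
  have himg : Polynomial.nthRootsFinset n (1 : ℂ) =
      Finset.image (fun j : Fin n => ω ^ (j : ℕ)) Finset.univ := by
    symm
    apply Finset.eq_of_subset_of_card_le
    · intro t ht
      simp only [Finset.mem_image] at ht
      obtain ⟨j, -, rfl⟩ := ht
      refine (Polynomial.mem_nthRootsFinset hn 1).2 ?_
      rw [← pow_mul, mul_comm, pow_mul, hω.pow_eq_one, one_pow]
    · rw [hω.card_nthRootsFinset, Finset.card_image_of_injective _ hinj,
        Finset.card_univ, Fintype.card_fin]
  rw [IsPrimitiveRoot.pow_sub_pow_eq_prod_sub_mul a b hn hω, himg,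
    Finset.prod_image (fun i _ j _ h => hinj h)]

open Fin.NatCast in
lemma perm_classify {m : ℕ} (σ : Equiv.Perm (Fin (m + 2)))
    (h : ∀ i, σ i = i ∨ σ i = i + 1) : σ = 1 ∨ ∀ i, σ i = i + 1 := by
  have hne : ∀ i : Fin (m + 2), i + 1 ≠ i := by
    intro i hi
    have : (1 : Fin (m + 2)) = 0 := by
      have := congrArg (· - i) hi
      simpa [add_sub_cancel_right] using this
    exact one_ne_zero this
  by_cases hid : ∀ i, σ i = i
  · exact Or.inl (Equiv.ext hid)
  · push_neg at hid
    obtain ⟨i₀, hi₀⟩ := hid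
    have hi₀' : σ i₀ = i₀ + 1 := (h i₀).resolve_left hi₀
    have step : ∀ i, σ i = i + 1 → σ (i + 1) = i + 1 + 1 := by
      intro i hi
      rcases h (i + 1) with h1 | h1
      · exfalso
        exact hne i (σ.injective (h1.trans hi.symm))
      · exact h1
    have key : ∀ k : ℕ, σ (i₀ + (k : Fin (m + 2))) = i₀ + (k : Fin (m + 2)) + 1 := by
      intro k
      induction k with
      | zero => simpa using hi₀'
      | succ k ih =>
        have : ((k + 1 : ℕ) : Fin (m + 2)) = (k : Fin (m + 2)) + 1 := by
          push_cast; ring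
        rw [this, ← add_assoc]
        exact step _ ih
    refine Or.inr fun j => ?_
    have := key ((j - i₀ : Fin (m + 2)) : ℕ)
    rwa [Fin.cast_val_eq_self, add_sub_cancel] at this

lemma PAP_diag {m : ℕ} (ω : ℂ) (σ : Equiv.Perm (Fin (m + 2))) :
    ((Matrix.of fun i j : Fin (m + 2) => if i = σ j then (1 : ℂ) else 0)ᵀ *
      Matrix.diagonal (fun j : Fin (m + 2) => ω ^ (j : ℕ)) *
      (Matrix.of fun i j : Fin (m + 2) => if i = σ j then 1 else 0)) =
    Matrix.diagonal (fun j => ω ^ ((σ j : Fin (m + 2)) : ℕ)) := by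
  ext j k
  simp only [Matrix.mul_apply, Matrix.transpose_apply, Matrix.of_apply,
    Matrix.diagonal_apply, ite_mul, mul_ite, one_mul, mul_one, zero_mul, mul_zero,
    Finset.sum_ite_eq, Finset.sum_ite_eq', Finset.mem_univ, if_true]
  by_cases hjk : j = k
  · subst hjk; simp
  · simp [hjk, Ne.symm hjk, fun h => hjk (σ.injective h)]

lemma bhat_eq {m : ℕ} :
    (Matrix.of fun j k : Fin (m + 2) =>
      if (j : ℕ) % (m + 2) = ((k : ℕ) + 1) % (m + 2) then (1 : ℂ) else 0) =
    Matrix.of fun j k : Fin (m + 2) => if j = k + 1 then (1 : ℂ) else 0 := by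
  ext j k
  simp only [Matrix.of_apply]
  have hval : ((k + 1 : Fin (m + 2)) : ℕ) = ((k : ℕ) + 1) % (m + 2) := by
    rw [Fin.val_add, Fin.val_one]
  have : ((j : ℕ) % (m + 2) = ((k : ℕ) + 1) % (m + 2)) ↔ j = k + 1 := by
    rw [Nat.mod_eq_of_lt j.isLt, Fin.ext_iff, hval]
  simp [this]

lemma det_cyclic {m : ℕ} (d c : Fin (m + 2) → ℂ) :
    (Matrix.of fun j k : Fin (m + 2) =>
        if j = k then d j else if j = k + 1 then c j else 0).det
      = ∏ j, d j + (-1) ^ (m + 1) * ∏ j, c j := by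
  set M : Matrix (Fin (m + 2)) (Fin (m + 2)) ℂ :=
    Matrix.of fun j k => if j = k then d j else if j = k + 1 then c j else 0 with hM
  have hne : ∀ i : Fin (m + 2), i + 1 ≠ i := by
    intro i hi
    have : (1 : Fin (m + 2)) = 0 := by
      have := congrArg (· - i) hi
      simpa [add_sub_cancel_right] using this
    exact one_ne_zero this
  set cyc : Equiv.Perm (Fin (m + 2)) := finRotate (m + 2) with hcyc
  have hcyc_apply : ∀ i : Fin (m + 2), cyc i = i + 1 := fun i => finRotate_succ_apply i
  have h1c : (1 : Equiv.Perm (Fin (m + 2))) ≠ cyc := by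
    intro h
    have := congrFun (congrArg (fun e : Equiv.Perm (Fin (m+2)) => (e : Fin (m+2) → Fin (m+2))) h) 0
    simp only [Equiv.Perm.coe_one, id_eq] at this
    rw [hcyc_apply 0, zero_add] at this
    exact one_ne_zero this.symm
  rw [Matrix.det_apply]
  have hzero : ∀ σ ∈ Finset.univ,
      σ ∉ ({1, cyc} : Finset (Equiv.Perm (Fin (m + 2)))) →
      Equiv.Perm.sign σ • ∏ i, M (σ i) i = 0 := by
    intro σ _ hσ
    simp only [Finset.mem_insert, Finset.mem_singleton, not_or] at hσ
    have : ¬ ∀ i, σ i = i ∨ σ i = i + 1 := by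
      intro hall
      rcases perm_classify σ hall with h | h
      · exact hσ.1 h
      · exact hσ.2 (Equiv.ext fun i => (h i).trans (hcyc_apply i).symm)
    push_neg at this
    obtain ⟨i, hi1, hi2⟩ := this
    have : M (σ i) i = 0 := by
      simp only [hM, Matrix.of_apply, if_neg hi1, if_neg hi2]
    have hp : ∏ i, M (σ i) i = 0 := Finset.prod_eq_zero (Finset.mem_univ i) this
    rw [hp, smul_zero]
  rw [← Finset.sum_subset (Finset.subset_univ {1, cyc}) hzero,
    Finset.sum_pair h1c]
  have hterm1 : ∏ i, M ((1 : Equiv.Perm (Fin (m+2))) i) i = ∏ j, d j := by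
    apply Finset.prod_congr rfl
    intro i _
    simp [hM]
  have hterm2 : ∏ i, M (cyc i) i = ∏ j, c (j + 1) := by
    apply Finset.prod_congr rfl
    intro i _
    simp [hM, hcyc_apply, hne i]
  have hterm2' : ∏ j, c (j + 1) = ∏ j, c j := by
    exact Equiv.prod_comp (Equiv.addRight (1 : Fin (m+2))) c
  rw [hterm1, hterm2, hterm2', Equiv.Perm.sign_one, hcyc, sign_finRotate]
  simp [Units.smul_def]

lemma fin_add_one_ne {m : ℕ} (i : Fin (m + 2)) : i + 1 ≠ i := by
  intro hi
  have : (1 : Fin (m + 2)) = 0 := by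
    have := congrArg (· - i) hi
    simpa [add_sub_cancel_right] using this
  exact one_ne_zero this

theorem stmt_10 (n : ℕ) (hn : 2 ≤ n)
    (ω : ℂ) (hω : ω = Complex.exp (2 * Real.pi * Complex.I / n))
    (A Bhat : Matrix (Fin n) (Fin n) ℂ)
    (hA : A = Matrix.diagonal (fun j : Fin n => ω ^ (j : ℕ)))
    (hBhat : Bhat = Matrix.of fun j k : Fin n =>
      if (j : ℕ) % n = ((k : ℕ) + 1) % n then 1 else 0) :
    ∀ P : Matrix (Fin n) (Fin n) ℂ, IsPermMatrix P →
      ∀ x y z : ℂ,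
        (x • (Pᵀ * A * P) + y • Bhat + z • ((Pᵀ * A * P) * Bhat) - 1).det = 0 ↔
          x ^ n + y ^ n + (-1 : ℂ) ^ (n - 1) * z ^ n = 1 := by
  obtain ⟨m, rfl⟩ : ∃ m, n = m + 2 := ⟨n - 2, by omega⟩
  intro P hP x y z
  obtain ⟨σ, hPdef⟩ := hP
  have hprim : IsPrimitiveRoot ω (m + 2) := by
    rw [hω]
    exact Complex.isPrimitiveRoot_exp _ (by omega)
  set μ : Fin (m + 2) → ℂ := fun j => ω ^ ((σ j : Fin (m + 2)) : ℕ) with hμ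
  have hPAP : Pᵀ * A * P = Matrix.diagonal μ := by
    rw [hPdef, hA]; exact PAP_diag ω σ
  have hMat : x • (Pᵀ * A * P) + y • Bhat + z • ((Pᵀ * A * P) * Bhat) - 1 =
      Matrix.of fun j k : Fin (m + 2) =>
        if j = k then x * μ j - 1 else if j = k + 1 then y + z * μ j else 0 := by
    rw [hPAP, hBhat, bhat_eq]
    ext j k
    by_cases hjk : j = k
    · subst hjk
      simp [Matrix.diagonal_apply, Matrix.one_apply, Ne.symm (fin_add_one_ne j),
        Matrix.diagonal_mul]
    · by_cases hjk1 : j = k + 1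
      · subst hjk1
        simp [Matrix.diagonal_apply, Matrix.one_apply, hjk, Matrix.diagonal_mul]
      · simp [Matrix.diagonal_apply, Matrix.one_apply, hjk, hjk1, Matrix.diagonal_mul]
  rw [hMat, det_cyclic]
  have h1 : ∏ j, (x * μ j - 1) = (-1 : ℂ) ^ (m + 2) * (1 - x ^ (m + 2)) := by
    calc ∏ j, (x * μ j - 1) = ∏ j : Fin (m + 2), (x * ω ^ (j : ℕ) - 1) :=
          Equiv.prod_comp σ (fun j : Fin (m + 2) => x * ω ^ (j : ℕ) - 1)
      _ = ∏ j : Fin (m + 2), (-1 : ℂ) * (1 - ω ^ (j : ℕ) * x) := by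
          apply Finset.prod_congr rfl; intro j _; ring
      _ = (-1 : ℂ) ^ (m + 2) * ∏ j : Fin (m + 2), (1 - ω ^ (j : ℕ) * x) := by
          rw [Finset.prod_mul_distrib, Finset.prod_const, Finset.card_univ,
            Fintype.card_fin]
      _ = (-1 : ℂ) ^ (m + 2) * (1 - x ^ (m + 2)) := by
          rw [prod_aux (by omega) hprim 1 x, one_pow]
  have h2 : ∏ j, (y + z * μ j) = y ^ (m + 2) - (-z) ^ (m + 2) := by
    calc ∏ j, (y + z * μ j) = ∏ j : Fin (m + 2), (y + z * ω ^ (j : ℕ)) :=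
          Equiv.prod_comp σ (fun j : Fin (m + 2) => y + z * ω ^ (j : ℕ))
      _ = ∏ j : Fin (m + 2), (y - ω ^ (j : ℕ) * (-z)) := by
          apply Finset.prod_congr rfl; intro j _; ring
      _ = y ^ (m + 2) - (-z) ^ (m + 2) := prod_aux (by omega) hprim y (-z)
  rw [h1, h2]
  have hsub : m + 2 - 1 = m + 1 := rfl
  rw [hsub]
  set t := (-1 : ℂ) ^ (m + 1) with ht
  have hpow : (-1 : ℂ) ^ (m + 2) = -t := by rw [ht, pow_succ]; ring
  have htz : (-z) ^ (m + 2) = -(t * z ^ (m + 2)) := by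
    rw [neg_pow, hpow]; ring
  have hLHS : (-1 : ℂ) ^ (m + 2) * (1 - x ^ (m + 2)) + t * (y ^ (m + 2) - (-z) ^ (m + 2))
      = t * (x ^ (m + 2) + y ^ (m + 2) + t * z ^ (m + 2) - 1) := by
    rw [htz, hpow]; ring
  rw [hLHS]
  have ht0 : t ≠ 0 := pow_ne_zero _ (by norm_num)
  constructor
  · intro h
    exact sub_eq_zero.mp ((mul_eq_zero.mp h).resolve_left ht0)
  · intro h
    rw [sub_eq_zero.mpr h, mul_zero]
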